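/- Let R be a commutative ring of characteristic 2 and T ∈ R. Define U on finitely supported ℤ-indexed sequences over R by (Ux)₋₁ = (1+T)x₀ + Tx₁, (Ux)₀ = Tx₀ + (1+T)x₁, (Ux)ₙ = xₙ₊₁ for n ∉ {−1,0}. Then U preserves the bilinear form B(x,y) = Σₙ xₙyₙ, i.e., B(Ux, Uy) = B(x, y) for all finitely supported x, y. -/

import Mathlib

theorem sznagy_form_preserving
    (R : Type*) [CommRing R] [CharP R 2] (T : R)
    (U : (ℤ →₀ R) →ₗ[R] (ℤ →₀ R))
    (hU₁ : ∀ x : ℤ →₀ R, (U x) (-1) = (1 + T) * x 0 + T * x 1)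
    (hU₂ : ∀ x : ℤ →₀ R, (U x) 0 = T * x 0 + (1 + T) * x 1)
    (hU₃ : ∀ (x : ℤ →₀ R) (n : ℤ), n ≠ -1 → n ≠ 0 → (U x) n = x (n + 1)) :
    ∀ x y : ℤ →₀ R,
      ((U x).sum fun n a => a * (U y) n) = x.sum fun n a => a * y n := by
  intro x y
  have h2 : (2 : R) = 0 := by
    have := CharP.cast_eq_zero R 2
    simpa using this
  set A : Finset ℤ := x.support ∪ y.support with hA
  set s₀ : Finset ℤ := ((A.image (· - 1)).erase (-1)).erase 0 with hs₀
  have h0s₀ : (0 : ℤ) ∉ s₀ := Finset.notMem_erase _ _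
  have hm1s₀ : (-1 : ℤ) ∉ s₀ := fun h => Finset.notMem_erase _ _ (Finset.mem_of_mem_erase h)
  set s : Finset ℤ := insert (-1) (insert 0 s₀) with hs
  -- s contains supports of U x and U y
  have hsub : ∀ z : ℤ →₀ R, z.support ⊆ A → (U z).support ⊆ s := by
    intro z hz n hn
    by_cases h1 : n = -1
    · simp [hs, h1]
    by_cases h00 : n = 0
    · simp [hs, h00]
    have : (U z) n = z (n + 1) := hU₃ z n h1 h00
    have hz' : z (n + 1) ≠ 0 := by
      rw [← this]; exact Finsupp.mem_support_iff.mp hn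
    have hmem : n + 1 ∈ A := hz (Finsupp.mem_support_iff.mpr hz')
    have : n ∈ A.image (· - 1) := Finset.mem_image.mpr ⟨n + 1, hmem, by ring⟩
    have : n ∈ s₀ := by
      rw [hs₀]
      exact Finset.mem_erase.mpr ⟨h00, Finset.mem_erase.mpr ⟨h1, this⟩⟩
    simp [hs, this]
  have hsubx : (U x).support ⊆ s := hsub x Finset.subset_union_left
  -- rewrite LHS as a sum over s
  have hL : ((U x).sum fun n a => a * (U y) n) = ∑ n ∈ s, (U x) n * (U y) n := by
    apply Finsupp.sum_of_support_subset _ hsubx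
    intro i _; exact zero_mul _
  -- target set
  set t : Finset ℤ := insert 0 (insert 1 (s₀.image (· + 1))) with ht
  have h0t : (0 : ℤ) ∉ insert 1 (s₀.image (· + 1)) := by
    simp only [Finset.mem_insert, Finset.mem_image]
    rintro (h | ⟨n, hn, hn'⟩)
    · exact absurd h (by norm_num)
    · have : n = -1 := by omega
      exact hm1s₀ (this ▸ hn)
  have h1t : (1 : ℤ) ∉ s₀.image (· + 1) := by
    simp only [Finset.mem_image]
    rintro ⟨n, hn, hn'⟩
    have : n = 0 := by omega
    exact h0s₀ (this ▸ hn)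
  have hsubt : ∀ z : ℤ →₀ R, z.support ⊆ A → z.support ⊆ t := by
    intro z hz m hm
    have hmA : m ∈ A := hz hm
    by_cases h00 : m = 0
    · simp [ht, h00]
    by_cases h11 : m = 1
    · simp [ht, h11]
    have : m - 1 ∈ A.image (· - 1) := Finset.mem_image.mpr ⟨m, hmA, rfl⟩
    have hms₀ : m - 1 ∈ s₀ := by
      rw [hs₀]
      exact Finset.mem_erase.mpr ⟨by omega, Finset.mem_erase.mpr ⟨by omega, this⟩⟩
    have : m ∈ s₀.image (· + 1) := Finset.mem_image.mpr ⟨m - 1, hms₀, by ring⟩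
    exact Finset.mem_insert_of_mem (Finset.mem_insert_of_mem this)
  have hR : (x.sum fun n a => a * y n) = ∑ n ∈ t, x n * y n := by
    apply Finsupp.sum_of_support_subset _ (hsubt x Finset.subset_union_left)
    intro i _; exact zero_mul _
  rw [hL, hR]
  -- split off heads
  rw [hs, Finset.sum_insert (by simp [hm1s₀]), Finset.sum_insert h0s₀]
  rw [ht, Finset.sum_insert h0t, Finset.sum_insert h1t]
  have htail : ∑ n ∈ s₀, (U x) n * (U y) n = ∑ n ∈ s₀.image (· + 1), x n * y n := by
    rw [Finset.sum_image (by intro a _ b _ h; have h' : a + 1 = b + 1 := h; omega)]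
    apply Finset.sum_congr rfl
    intro n hn
    have h1 : n ≠ -1 := fun h => hm1s₀ (h ▸ hn)
    have h0 : n ≠ 0 := fun h => h0s₀ (h ▸ hn)
    rw [hU₃ x n h1 h0, hU₃ y n h1 h0]
  rw [htail, hU₁ x, hU₁ y, hU₂ x, hU₂ y]
  ring_nf
  linear_combination (T * (x 0 * y 0 + x 1 * y 1) + T ^ 2 * (x 0 * y 0 + x 1 * y 1) +
    T * (x 0 * y 1 + x 1 * y 0) + T ^ 2 * (x 0 * y 1 + x 1 * y 0)) * h2
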